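/- For every natural number m ≥ 1, the maximum over θ ∈ ℝ of r(θ) = (1+cos θ)^m + (1+sin θ)^m satisfies max_θ r(θ) ≥ 2^m + 1 + m/2^{m+1}. -/

import Mathlib

open Real

theorem stmt_2 (m : ℕ) (hm : 1 ≤ m) :
    (2 : ℝ) ^ m + 1 + m / 2 ^ (m + 1) ≤
      ⨆ θ : ℝ, (1 + cos θ) ^ m + (1 + sin θ) ^ m := by
  have hbdd : BddAbove (Set.range fun θ : ℝ => (1 + cos θ) ^ m + (1 + sin θ) ^ m) := by
    refine ⟨2 ^ m + 2 ^ m, ?_⟩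
    rintro x ⟨θ, rfl⟩
    have h1 : (1 + cos θ) ^ m ≤ 2 ^ m :=
      pow_le_pow_left₀ (by nlinarith [neg_one_le_cos θ]) (by nlinarith [cos_le_one θ]) m
    have h2 : (1 + sin θ) ^ m ≤ 2 ^ m :=
      pow_le_pow_left₀ (by nlinarith [neg_one_le_sin θ]) (by nlinarith [sin_le_one θ]) m
    exact add_le_add h1 h2
  set t : ℝ := 1 / 2 ^ m with ht
  have ht0 : 0 < t := by positivity
  have htm : (2:ℝ)^m * t = 1 := by rw [ht]; field_simp
  have ht1 : t ≤ 1 / 2 := by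
    have h2 : (2:ℝ) ≤ 2 ^ m := by
      calc (2:ℝ) = 2 ^ 1 := (pow_one 2).symm
        _ ≤ 2 ^ m := pow_le_pow_right₀ one_le_two hm
    rw [ht]
    exact one_div_le_one_div_of_le (by norm_num) h2
  refine le_trans ?_ (le_ciSup hbdd t)
  have hsin : t - t ^ 3 / 4 < sin t := by
    have := Real.sin_gt_sub_cube ht0; linarith [pow_pos ht0 3]
  have hcos : 1 - t ^ 2 / 2 ≤ cos t := Real.one_sub_sq_div_two_le_cos
  have hM : (1:ℝ) ≤ m := by exact_mod_cast hm
  have hc : (2:ℝ) ^ m * (1 - m * (t^2/4)) ≤ (1 + cos t) ^ m := by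
    have h1 : (0:ℝ) ≤ 2 - t^2/2 := by nlinarith
    have h2 : (2 - t^2/2 : ℝ) ^ m ≤ (1 + cos t) ^ m :=
      pow_le_pow_left₀ h1 (by linarith) m
    have h3 : (2:ℝ) ^ m * (1 - m * (t^2/4)) ≤ (2 - t^2/2) ^ m := by
      have hb : (1 : ℝ) + m * (-(t^2/4)) ≤ (1 + (-(t^2/4))) ^ m :=
        one_add_mul_le_pow (by nlinarith) m
      have h2m : (0:ℝ) ≤ 2 ^ m := by positivity
      calc (2:ℝ) ^ m * (1 - m * (t^2/4)) ≤ 2 ^ m * (1 + (-(t^2/4))) ^ m := by nlinarith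
        _ = (2 - t^2/2) ^ m := by rw [← mul_pow]; ring_nf
    linarith
  have hs : 1 + m * (t - t^3/4) ≤ (1 + sin t) ^ m := by
    have hb : (1:ℝ) + m * sin t ≤ (1 + sin t) ^ m :=
      one_add_mul_le_pow (by nlinarith [neg_one_le_sin t]) m
    have h : (m:ℝ) * (t - t^3/4) ≤ m * sin t := by nlinarith
    linarith
  have hdiv : (m:ℝ) / 2 ^ (m+1) = m * t / 2 := by
    rw [ht, pow_succ]; field_simp
  have h2mt2 : (2:ℝ)^m * t^2 = t := by
    calc (2:ℝ)^m * t^2 = (2^m * t) * t := by ring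
      _ = t := by rw [htm]; ring
  have key : (2:ℝ) ^ m + 1 + m / 2 ^ (m+1) ≤
      (2:ℝ) ^ m * (1 - m * (t^2/4)) + (1 + m * (t - t^3/4)) := by
    rw [hdiv]
    nlinarith [h2mt2, mul_nonneg (le_trans zero_le_one hM) ht0.le, sq_nonneg t,
      mul_le_mul_of_nonneg_left (mul_le_mul ht1 ht1 ht0.le (by norm_num) : t * t ≤ 1/2 * (1/2))
        (le_trans zero_le_one hM)]
  linarith
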